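/- Let n ≥ 3 and let Σ = {g ∈ SL(n,ℤ) : g(e₁) = ±e₁} and Σ̃ = {g ∈ GL(n,ℤ) : g(e₁) = ±e₁}. Then there exist elements g₁,...,g_r ∈ SL(n,ℤ) \ Σ such that ⋂_{i=1}^r g_i⁻¹ Σ̃ g_i = {±I}, and moreover the g_i can be chosen so that g_i g_j⁻¹ ∉ Σ whenever i ≠ j. -/

import Mathlib

open Matrix

namespace Stmt0Aux

variable {n : ℕ}

/-- basis vector -/
def bv (k : Fin n) : Fin n → ℤ := fun j => if j = k then 1 else 0

lemma bv_self (k : Fin n) : bv k k = 1 := by simp [bv]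
lemma bv_ne {j k : Fin n} (h : j ≠ k) : bv k j = 0 := by simp [bv, h]

lemma mulVec_bv (M : Matrix (Fin n) (Fin n) ℤ) (k : Fin n) :
    M.mulVec (bv k) = fun i => M i k := by
  funext i
  simp [bv, Matrix.mulVec, dotProduct]

lemma transvection_mulVec' (a b : Fin n) (c : ℤ) (v : Fin n → ℤ) :
    (Matrix.transvection a b c).mulVec v = fun i => v i + (if i = a then c * v b else 0) := by
  funext i
  simp only [Matrix.transvection, Matrix.add_mulVec, Matrix.one_mulVec, Pi.add_apply]
  congr 1
  simp [Matrix.mulVec, dotProduct, Matrix.single, ite_and]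
  by_cases h : a = i <;> simp [h, eq_comm]

/-- transvection in SL -/
def Tsl (a b : Fin n) (h : a ≠ b) (c : ℤ) : SpecialLinearGroup (Fin n) ℤ :=
  ⟨Matrix.transvection a b c, Matrix.det_transvection_of_ne a b h c⟩

/-- signed swap in SL -/
def Ssl (a b : Fin n) (h : a ≠ b) : SpecialLinearGroup (Fin n) ℤ :=
  Tsl a b h 1 * Tsl b a h.symm (-1) * Tsl a b h 1

lemma Tsl_mulVec_bv (a b : Fin n) (h : a ≠ b) :
    (Tsl a b h 1).1.mulVec (bv b) = bv b + bv a := by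
  rw [Tsl, transvection_mulVec']
  funext i
  by_cases hi : i = a <;> simp [hi, bv_self, bv_ne, h, bv]

lemma Ssl_mulVec_bv (a b : Fin n) (h : a ≠ b) :
    (Ssl a b h).1.mulVec (bv b) = bv a := by
  have e1 : (Tsl a b h 1).1.mulVec (bv b) = bv b + bv a := Tsl_mulVec_bv a b h
  rw [Ssl]
  show ((Tsl a b h 1).1 * (Tsl b a h.symm (-1)).1 * (Tsl a b h 1).1).mulVec (bv b) = bv a
  rw [← Matrix.mulVec_mulVec, ← Matrix.mulVec_mulVec, e1]
  have e2 : (Tsl b a h.symm (-1)).1.mulVec (bv b + bv a) = bv a := by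
    rw [Tsl, transvection_mulVec']
    funext i
    by_cases hi : i = b <;> by_cases hia : i = a <;>
      simp_all [bv, h, h.symm]
  rw [e2]
  rw [Tsl, transvection_mulVec']
  funext i
  by_cases hi : i = a <;> simp_all [bv, (Ne.symm h)]

lemma sl_mulVec_cancel (g : SpecialLinearGroup (Fin n) ℤ) {x y : Fin n → ℤ}
    (h : g.1.mulVec x = g.1.mulVec y) : x = y := by
  have hc : ((g⁻¹ : SpecialLinearGroup (Fin n) ℤ).1 * g.1) = 1 := by
    exact congrArg Subtype.val (inv_mul_cancel g)
  have := congrArg (fun z => ((g⁻¹ : SpecialLinearGroup (Fin n) ℤ)).1.mulVec z) h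
  simp only [Matrix.mulVec_mulVec, hc, Matrix.one_mulVec] at this
  exact this

lemma sl_inv_mulVec (g : SpecialLinearGroup (Fin n) ℤ) (x : Fin n → ℤ) :
    g.1.mulVec ((g⁻¹ : SpecialLinearGroup (Fin n) ℤ).1.mulVec x) = x := by
  have hc : (g.1 * (g⁻¹ : SpecialLinearGroup (Fin n) ℤ).1) = 1 := by
    exact congrArg Subtype.val (mul_inv_cancel g)
  simp only [Matrix.mulVec_mulVec, hc, Matrix.one_mulVec]

/-- conjugation membership -/
lemma conj_mem_iff (g : SpecialLinearGroup (Fin n) ℤ) (A : GL (Fin n) ℤ) (x : Fin n → ℤ) :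
    ((SpecialLinearGroup.toGL g * A * (SpecialLinearGroup.toGL g)⁻¹).1.mulVec x = x ∨
     (SpecialLinearGroup.toGL g * A * (SpecialLinearGroup.toGL g)⁻¹).1.mulVec x = -x)
    ↔ (A.1.mulVec ((g⁻¹ : SpecialLinearGroup (Fin n) ℤ).1.mulVec x)
          = (g⁻¹ : SpecialLinearGroup (Fin n) ℤ).1.mulVec x ∨
       A.1.mulVec ((g⁻¹ : SpecialLinearGroup (Fin n) ℤ).1.mulVec x)
          = -((g⁻¹ : SpecialLinearGroup (Fin n) ℤ).1.mulVec x)) := by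
  have hval : (SpecialLinearGroup.toGL g * A * (SpecialLinearGroup.toGL g)⁻¹).1.mulVec x
      = g.1.mulVec (A.1.mulVec ((g⁻¹ : SpecialLinearGroup (Fin n) ℤ).1.mulVec x)) := by
    rw [← map_inv]
    show (g.1 * A.1 * (g⁻¹ : SpecialLinearGroup (Fin n) ℤ).1).mulVec x = _
    rw [← Matrix.mulVec_mulVec, ← Matrix.mulVec_mulVec]
  rw [hval]
  constructor
  · rintro (h | h)
    · left
      exact sl_mulVec_cancel g (by rw [h, sl_inv_mulVec])
    · right
      apply sl_mulVec_cancel g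
      rw [h]
      rw [Matrix.mulVec_neg, sl_inv_mulVec]
  · rintro (h | h)
    · left; rw [h, sl_inv_mulVec]
    · right; rw [h, Matrix.mulVec_neg, sl_inv_mulVec]

lemma exists_third (hn : 3 ≤ n) (a b : Fin n) : ∃ k : Fin n, k ≠ a ∧ k ≠ b := by
  by_contra h
  push_neg at h
  have hsub : (Finset.univ : Finset (Fin n)) ⊆ {a, b} := by
    intro k _
    simp only [Finset.mem_insert, Finset.mem_singleton]
    rcases eq_or_ne k a with h' | h'
    · exact Or.inl h'
    · exact Or.inr (h k h')
  have h1 := Finset.card_le_card hsub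
  have h2 : ({a, b} : Finset (Fin n)).card ≤ 2 := by
    apply le_trans (Finset.card_insert_le _ _)
    simp
  simp only [Finset.card_univ, Fintype.card_fin] at h1
  omega

lemma rigidity (hn : 3 ≤ n) (z : Fin n) (M : Matrix (Fin n) (Fin n) ℤ)
    (Hcol : ∀ k : Fin n, k ≠ z → (M.mulVec (bv k) = bv k ∨ M.mulVec (bv k) = -(bv k)))
    (Hsum : ∀ k : Fin n, k ≠ z →
      (M.mulVec (bv z + bv k) = bv z + bv k ∨ M.mulVec (bv z + bv k) = -(bv z + bv k))) :
    M = 1 ∨ M = -1 := by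
  have hcol : ∀ k, k ≠ z → ∀ i, i ≠ k → M i k = 0 := by
    intro k hk i hik
    rcases Hcol k hk with h | h <;> rw [mulVec_bv] at h
    · have := congrFun h i
      simpa [bv_ne hik] using this
    · have := congrFun h i
      simpa [bv_ne hik] using this
  have hsum : ∀ k, k ≠ z →
      ((∀ i, M i z + M i k = bv z i + bv k i) ∨
       (∀ i, M i z + M i k = -(bv z i + bv k i))) := by
    intro k hk
    rcases Hsum k hk with h | h <;>
      rw [Matrix.mulVec_add, mulVec_bv, mulVec_bv] at h
    · left; intro i; simpa using congrFun h i
    · right; intro i; simpa using congrFun h i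
  have hz0 : ∀ i, i ≠ z → M i z = 0 := by
    intro i hi
    obtain ⟨k, hkz, hki⟩ := exists_third hn z i
    have h1 : M i k = 0 := hcol k hkz i (Ne.symm hki)
    rcases hsum k hkz with h | h <;> have h := h i <;>
      rw [bv_ne hi, bv_ne (Ne.symm hki)] at h <;> omega
  have hdiag : ∀ k, k ≠ z → M k k = M z z := by
    intro k hk
    have h1 : M k z = 0 := hz0 k hk
    have h2 : M z k = 0 := hcol k hk z (Ne.symm hk)
    rcases hsum k hk with h | h <;> have hz' := h z <;> have hk' := h k <;>
      rw [bv_self, bv_ne (Ne.symm hk)] at hz' <;>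
      rw [bv_self, bv_ne hk] at hk' <;> omega
  obtain ⟨k0, hk0, -⟩ := exists_third hn z z
  have hs : M z z = 1 ∨ M z z = -1 := by
    have h2 : M z k0 = 0 := hcol k0 hk0 z (Ne.symm hk0)
    rcases hsum k0 hk0 with h | h <;> have h := h z <;>
      rw [bv_self, bv_ne (Ne.symm hk0)] at h <;> omega
  have hent : ∀ i j, M i j = if i = j then M z z else 0 := by
    intro i j
    rcases eq_or_ne i j with rfl | hij
    · rcases eq_or_ne i z with rfl | hiz
      · simp
      · simp [hdiag i hiz]
    · rcases eq_or_ne j z with rfl | hjz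
      · simp [hij, hz0 i hij]
      · simp [hij, hcol j hjz i hij]
  rcases hs with h | h
  · left
    ext i j
    rw [hent i j, Matrix.one_apply]
    split <;> simp [h]
  · right
    ext i j
    rw [hent i j]
    simp only [Matrix.neg_apply, Matrix.one_apply]
    split <;> simp [h]

section Family

def idx (hn : 3 ≤ n) : Fin (n-1) → Fin n := fun i => ⟨i.1 + 1, by omega⟩

lemma idx_ne (hn : 3 ≤ n) (i : Fin (n-1)) : idx hn i ≠ (⟨0, Nat.lt_of_lt_of_le (by decide) hn⟩ : Fin n) := by
  simp [idx, Fin.ext_iff]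

lemma idx_inj (hn : 3 ≤ n) {a b : Fin (n-1)} (h : idx hn a = idx hn b) : a = b := by
  simp only [idx, Fin.mk.injEq] at h
  exact Fin.ext (by omega)

lemma idx_surj (hn : 3 ≤ n) (k : Fin n) (hk : k ≠ (⟨0, Nat.lt_of_lt_of_le (by decide) hn⟩ : Fin n)) : ∃ i, idx hn i = k := by
  have hk0 : k.1 ≠ 0 := by
    intro h
    exact hk (Fin.ext h)
  exact ⟨⟨k.1 - 1, by omega⟩, Fin.ext (by simp [idx]; omega)⟩

def hh (hn : 3 ≤ n) : Fin (n-1) ⊕ Fin (n-1) → SpecialLinearGroup (Fin n) ℤ :=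
  Sum.elim (fun i => Ssl (idx hn i) ⟨0, Nat.lt_of_lt_of_le (by decide) hn⟩ (idx_ne hn i))
           (fun i => Tsl (idx hn i) ⟨0, Nat.lt_of_lt_of_le (by decide) hn⟩ (idx_ne hn i) 1)

def wv (hn : 3 ≤ n) : Fin (n-1) ⊕ Fin (n-1) → (Fin n → ℤ) :=
  Sum.elim (fun i => bv (idx hn i))
           (fun i => bv (⟨0, Nat.lt_of_lt_of_le (by decide) hn⟩ : Fin n) + bv (idx hn i))

lemma hh_act (hn : 3 ≤ n) (s : Fin (n-1) ⊕ Fin (n-1)) :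
    (hh hn s).1.mulVec (bv (⟨0, Nat.lt_of_lt_of_le (by decide) hn⟩ : Fin n)) = wv hn s := by
  rcases s with i | i
  · exact Ssl_mulVec_bv (idx hn _) _ (idx_ne hn _)
  · exact Tsl_mulVec_bv (idx hn _) _ (idx_ne hn _)

lemma inv_shift (h : SpecialLinearGroup (Fin n) ℤ) {x w : Fin n → ℤ}
    (hw : h.1.mulVec x = w)
    (hyp : (h⁻¹ : SpecialLinearGroup (Fin n) ℤ).1.mulVec x = x ∨
           (h⁻¹ : SpecialLinearGroup (Fin n) ℤ).1.mulVec x = -x) :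
    x = w ∨ x = -w := by
  rcases hyp with h1 | h1
  · left
    have := congrArg (fun v => h.1.mulVec v) h1
    rw [sl_inv_mulVec, hw] at this
    exact this
  · right
    have := congrArg (fun v => h.1.mulVec v) h1
    rw [sl_inv_mulVec, Matrix.mulVec_neg, hw] at this
    exact this

lemma pair_shift (h1 h2 : SpecialLinearGroup (Fin n) ℤ) {x w1 w2 : Fin n → ℤ}
    (e1 : h1.1.mulVec x = w1) (e2 : h2.1.mulVec x = w2)
    (hyp : ((h1⁻¹ * h2 : SpecialLinearGroup (Fin n) ℤ)).1.mulVec x = x ∨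
           ((h1⁻¹ * h2 : SpecialLinearGroup (Fin n) ℤ)).1.mulVec x = -x) :
    w2 = w1 ∨ w2 = -w1 := by
  have key : ((h1⁻¹ * h2 : SpecialLinearGroup (Fin n) ℤ)).1.mulVec x
      = (h1⁻¹ : SpecialLinearGroup (Fin n) ℤ).1.mulVec w2 := by
    rw [show (h1⁻¹ * h2 : SpecialLinearGroup (Fin n) ℤ).1 = (h1⁻¹ : SpecialLinearGroup (Fin n) ℤ).1 * h2.1 from rfl, ← Matrix.mulVec_mulVec, e2]
  rw [key] at hyp
  rcases hyp with h | h
  · left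
    have := congrArg (fun v => h1.1.mulVec v) h
    rw [sl_inv_mulVec, e1] at this
    exact this
  · right
    have := congrArg (fun v => h1.1.mulVec v) h
    rw [sl_inv_mulVec, Matrix.mulVec_neg, e1] at this
    exact this

lemma wv_ne (hn : 3 ≤ n) {s t : Fin (n-1) ⊕ Fin (n-1)} (hst : s ≠ t) :
    ¬(wv hn t = wv hn s ∨ wv hn t = -wv hn s) := by
  have hzne : ∀ i : Fin (n-1), ((⟨0, Nat.lt_of_lt_of_le (by decide) hn⟩ : Fin n)) ≠ idx hn i :=
    fun i => Ne.symm (idx_ne hn i)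
  rcases s with a | a <;> rcases t with b | b <;> rintro (h | h)
  · have hab : idx hn b ≠ idx hn a := fun hh => hst (by rw [idx_inj hn hh])
    have c := congrFun h (idx hn b)
    simp only [wv, Sum.elim_inl, Sum.elim_inr, Pi.add_apply, Pi.neg_apply] at c
    rw [bv_self, bv_ne hab] at c
    exact one_ne_zero c
  · have hab : idx hn b ≠ idx hn a := fun hh => hst (by rw [idx_inj hn hh])
    have c := congrFun h (idx hn b)
    simp only [wv, Sum.elim_inl, Sum.elim_inr, Pi.add_apply, Pi.neg_apply] at c
    rw [bv_self, bv_ne hab] at c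
    norm_num at c
  · have c := congrFun h (⟨0, Nat.lt_of_lt_of_le (by decide) hn⟩ : Fin n)
    simp only [wv, Sum.elim_inl, Sum.elim_inr, Pi.add_apply, Pi.neg_apply] at c
    rw [bv_self, bv_ne (hzne b), bv_ne (hzne a)] at c
    norm_num at c
  · have c := congrFun h (⟨0, Nat.lt_of_lt_of_le (by decide) hn⟩ : Fin n)
    simp only [wv, Sum.elim_inl, Sum.elim_inr, Pi.add_apply, Pi.neg_apply] at c
    rw [bv_self, bv_ne (hzne b), bv_ne (hzne a)] at c
    norm_num at c
  · have c := congrFun h (⟨0, Nat.lt_of_lt_of_le (by decide) hn⟩ : Fin n)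
    simp only [wv, Sum.elim_inl, Sum.elim_inr, Pi.add_apply, Pi.neg_apply] at c
    rw [bv_self, bv_ne (hzne b), bv_ne (hzne a)] at c
    norm_num at c
  · have c := congrFun h (⟨0, Nat.lt_of_lt_of_le (by decide) hn⟩ : Fin n)
    simp only [wv, Sum.elim_inl, Sum.elim_inr, Pi.add_apply, Pi.neg_apply] at c
    rw [bv_self, bv_ne (hzne b), bv_ne (hzne a)] at c
    norm_num at c
  · have hab : b ≠ a := fun hh => hst (by rw [hh])
    have hab' : idx hn b ≠ idx hn a := fun hh => hab (idx_inj hn hh)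
    have c := congrFun h (idx hn b)
    simp only [wv, Sum.elim_inl, Sum.elim_inr, Pi.add_apply, Pi.neg_apply] at c
    simp only [bv_self, bv_ne hab', bv_ne (idx_ne hn b)] at c
    norm_num at c
  · have hab : b ≠ a := fun hh => hst (by rw [hh])
    have hab' : idx hn b ≠ idx hn a := fun hh => hab (idx_inj hn hh)
    have c := congrFun h (idx hn b)
    simp only [wv, Sum.elim_inl, Sum.elim_inr, Pi.add_apply, Pi.neg_apply] at c
    simp only [bv_self, bv_ne hab', bv_ne (idx_ne hn b)] at c
    norm_num at c

lemma bvz_ne_wv (hn : 3 ≤ n) (s : Fin (n-1) ⊕ Fin (n-1)) :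
    ¬(bv (⟨0, Nat.lt_of_lt_of_le (by decide) hn⟩ : Fin n) = wv hn s ∨
      bv (⟨0, Nat.lt_of_lt_of_le (by decide) hn⟩ : Fin n) = -wv hn s) := by
  rcases s with i | i <;> rintro (h | h) <;>
    have c := congrFun h (idx hn i) <;>
    simp only [wv, Sum.elim_inl, Sum.elim_inr, Pi.add_apply, Pi.neg_apply, bv_self,
      bv_ne (idx_ne hn i)] at c <;>
    norm_num at c

end Family

end Stmt0Aux

open Stmt0Aux in
theorem stmt_0 (n : ℕ) (hn : 3 ≤ n) :
    ∀ (e : Fin n → ℤ), e = (fun j => if j = (⟨0, by omega⟩ : Fin n) then 1 else 0) →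
    ∀ (Sig : Set (Matrix.SpecialLinearGroup (Fin n) ℤ)),
      Sig = {g | g.1.mulVec e = e ∨
                 g.1.mulVec e = -e} →
    ∀ (SigT : Set (Matrix.GeneralLinearGroup (Fin n) ℤ)),
      SigT = {g | g.1.mulVec e = e ∨
                 g.1.mulVec e = -e} →
    ∃ (r : ℕ) (gs : Fin r → Matrix.SpecialLinearGroup (Fin n) ℤ),
      (∀ i, gs i ∉ Sig) ∧
      ({A : Matrix.GeneralLinearGroup (Fin n) ℤ |
          ∀ i, Matrix.SpecialLinearGroup.toGL (gs i) * A *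
            (Matrix.SpecialLinearGroup.toGL (gs i))⁻¹ ∈ SigT} = {1, -1}) ∧
      (∀ i j, i ≠ j → gs i * (gs j)⁻¹ ∉ Sig) := by
  intro e he Sig hSig SigT hSigT
  subst hSig hSigT
  have he' : e = Stmt0Aux.bv (⟨0, by omega⟩ : Fin n) := he
  subst he'
  refine ⟨(n-1)+(n-1), fun i => (Stmt0Aux.hh hn (finSumFinEquiv.symm i))⁻¹, ?_, ?_, ?_⟩
  · intro i hi
    simp only [Set.mem_setOf_eq] at hi
    have key := Stmt0Aux.inv_shift (Stmt0Aux.hh hn (finSumFinEquiv.symm i))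
      (Stmt0Aux.hh_act hn (finSumFinEquiv.symm i)) hi
    exact Stmt0Aux.bvz_ne_wv hn (finSumFinEquiv.symm i) key
  · ext A
    simp only [Set.mem_setOf_eq, Set.mem_insert_iff, Set.mem_singleton_iff]
    constructor
    · intro H
      have H' : ∀ s, A.1.mulVec (Stmt0Aux.wv hn s) = Stmt0Aux.wv hn s ∨
          A.1.mulVec (Stmt0Aux.wv hn s) = -(Stmt0Aux.wv hn s) := by
        intro s
        have h := H (finSumFinEquiv s)
        simp only [Equiv.symm_apply_apply] at h
        have h2 := (Stmt0Aux.conj_mem_iff ((Stmt0Aux.hh hn s)⁻¹) A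
          (Stmt0Aux.bv ⟨0, by omega⟩)).mp h
        rwa [inv_inv, Stmt0Aux.hh_act hn s] at h2
      have Hcol : ∀ k : Fin n, k ≠ (⟨0, by omega⟩ : Fin n) →
          (A.1.mulVec (Stmt0Aux.bv k) = Stmt0Aux.bv k ∨
           A.1.mulVec (Stmt0Aux.bv k) = -(Stmt0Aux.bv k)) := by
        intro k hk
        obtain ⟨i, rfl⟩ := Stmt0Aux.idx_surj hn k hk
        exact H' (Sum.inl i)
      have Hsum : ∀ k : Fin n, k ≠ (⟨0, by omega⟩ : Fin n) →
          (A.1.mulVec (Stmt0Aux.bv ⟨0, by omega⟩ + Stmt0Aux.bv k)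
              = Stmt0Aux.bv ⟨0, by omega⟩ + Stmt0Aux.bv k ∨
           A.1.mulVec (Stmt0Aux.bv ⟨0, by omega⟩ + Stmt0Aux.bv k)
              = -(Stmt0Aux.bv ⟨0, by omega⟩ + Stmt0Aux.bv k)) := by
        intro k hk
        obtain ⟨i, rfl⟩ := Stmt0Aux.idx_surj hn k hk
        exact H' (Sum.inr i)
      rcases Stmt0Aux.rigidity hn ⟨0, by omega⟩ A.1 Hcol Hsum with h | h
      · left; exact Units.ext (by rw [h, Units.val_one])
      · right; exact Units.ext (by rw [h, Units.val_neg, Units.val_one])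
    · rintro (rfl | rfl) i
      · have h1 : Matrix.SpecialLinearGroup.toGL ((Stmt0Aux.hh hn (finSumFinEquiv.symm i))⁻¹) * 1 *
            (Matrix.SpecialLinearGroup.toGL ((Stmt0Aux.hh hn (finSumFinEquiv.symm i))⁻¹))⁻¹ = 1 := by
          rw [mul_one, mul_inv_cancel]
        rw [h1]
        left
        rw [Units.val_one, Matrix.one_mulVec]
      · have h1 : Matrix.SpecialLinearGroup.toGL ((Stmt0Aux.hh hn (finSumFinEquiv.symm i))⁻¹) * (-1) *
            (Matrix.SpecialLinearGroup.toGL ((Stmt0Aux.hh hn (finSumFinEquiv.symm i))⁻¹))⁻¹ = -1 := by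
          rw [mul_neg_one, neg_mul, mul_inv_cancel]
        rw [h1]
        right
        rw [Units.val_neg, Units.val_one, Matrix.neg_mulVec, Matrix.one_mulVec]
  · intro i j hij hmem
    have hst : finSumFinEquiv.symm i ≠ finSumFinEquiv.symm j := by
      intro h
      exact hij (by simpa using congrArg finSumFinEquiv h)
    simp only [Set.mem_setOf_eq, inv_inv] at hmem
    have key := Stmt0Aux.pair_shift (Stmt0Aux.hh hn (finSumFinEquiv.symm i))
      (Stmt0Aux.hh hn (finSumFinEquiv.symm j))
      (Stmt0Aux.hh_act hn _) (Stmt0Aux.hh_act hn _) hmem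
    exact Stmt0Aux.wv_ne hn hst (Or.imp id id key)
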